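/- Let φ : ℝ × ℝⁿ → ℝⁿ be a smooth map with φ(0,·) = id such that each φ(t,·) is a diffeomorphism of ℝⁿ, and such that the inverse family ψ, defined by ψ(t,x) = φ(t,·)⁻¹(x), is smooth. Let k ≥ 1 and X : ℝⁿ → ℝⁿ be such that for every x: ∂ʲ_t φ(0,x) = 0 for 1 ≤ j ≤ k−1 and ∂ᵏ_t φ(0,x) = k!·X(x). Then for every x: ∂ʲ_t ψ(0,x) = 0 for 1 ≤ j ≤ k−1 and ∂ᵏ_t ψ(0,x) = −k!·X(x). -/

import Mathlib

noncomputable section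

open Filter Asymptotics Set

variable {E : Type*} [NormedAddCommGroup E] [NormedSpace ℝ E]

/-- iterated derivative of a monomial -/
lemma myIteratedDeriv_pow (k : ℕ) : ∀ j : ℕ, iteratedDeriv j (fun t : ℝ => t ^ k) =
    fun t => (k.descFactorial j : ℝ) * t ^ (k - j) := by
  intro j
  induction j with
  | zero => simp [iteratedDeriv_zero]
  | succ j ih =>
    rw [iteratedDeriv_succ, ih]
    funext t
    rw [deriv_const_mul _ (differentiableAt_pow _), deriv_pow_field]
    rw [Nat.descFactorial_succ, Nat.sub_sub]
    push_cast
    ring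

lemma myIteratedDeriv_smul_const {f : ℝ → ℝ} (hf : ContDiff ℝ (⊤ : ℕ∞) f) (c : E) (j : ℕ) :
    iteratedDeriv j (fun t => f t • c) = fun t => iteratedDeriv j f t • c := by
  induction j with
  | zero => simp [iteratedDeriv_zero]
  | succ j ih =>
    rw [iteratedDeriv_succ, ih, iteratedDeriv_succ]
    funext t
    exact deriv_smul_const
      ((hf.differentiable_iteratedDeriv j (by exact_mod_cast lt_top_iff_ne_top.2 (by simp))).differentiableAt) c

lemma myIteratedDeriv_sub_const {f : ℝ → E} (c : E) (j : ℕ) (hj : 1 ≤ j) :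
    iteratedDeriv j (fun t : ℝ => f t - c) = iteratedDeriv j f := by
  obtain ⟨i, rfl⟩ := Nat.exists_eq_add_of_le hj
  rw [add_comm]
  rw [iteratedDeriv_succ', iteratedDeriv_succ']
  have h : (deriv fun t => f t - c) = deriv f := funext fun t => deriv_sub_const c
  rw [h]

/-- If all iterated derivatives up to order `n` vanish at `0`, then `f = O(t^(n+1))`. -/
lemma myBigO_of_derivs_zero : ∀ (n : ℕ) {f : ℝ → E}, ContDiff ℝ (⊤ : ℕ∞) f →
    (∀ j ≤ n, iteratedDeriv j f 0 = 0) → f =O[nhds (0:ℝ)] fun t => t ^ (n + 1) := by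
  intro n
  induction n with
  | zero =>
    intro f hf h
    have h0 : f 0 = 0 := by simpa [iteratedDeriv_zero] using h 0 le_rfl
    simpa [h0] using (hf.differentiable (by simp) 0).isBigO_sub
  | succ n ih =>
    intro f hf h
    have hd : ContDiff ℝ (⊤ : ℕ∞) (deriv f) := (contDiff_infty_iff_deriv.mp hf).2
    have hD : deriv f =O[nhds (0:ℝ)] fun t => t ^ (n + 1) :=
      ih hd fun j hj => by
        rw [← iteratedDeriv_succ']; exact h (j + 1) (by omega)
    obtain ⟨C, hC0, hC⟩ := hD.exists_pos
    obtain ⟨ε, hε0, hball⟩ := Metric.eventually_nhds_iff.mp hC.bound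
    have h0 : f 0 = 0 := by simpa [iteratedDeriv_zero] using h 0 (by omega)
    rw [isBigO_iff]
    refine ⟨C, Metric.eventually_nhds_iff.mpr ⟨ε, hε0, fun t ht => ?_⟩⟩
    have hdist : |t| < ε := by simpa [Real.dist_eq] using ht
    have hmv : ‖f t - f 0‖ ≤ (C * |t| ^ (n + 1)) * ‖t - (0:ℝ)‖ := by
      refine Convex.norm_image_sub_le_of_norm_deriv_le
        (fun y _ => (hf.differentiable (by simp)).differentiableAt)
        (fun y hy => ?_) (convex_closedBall (0:ℝ) |t|)
        (Metric.mem_closedBall.mpr (by simp [Real.dist_eq])) (Metric.mem_closedBall.mpr (by simp [Real.dist_eq]))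
      have hyt : |y| ≤ |t| := by simpa [Real.dist_eq] using hy
      have := hball (y := y) (by simpa [Real.dist_eq] using lt_of_le_of_lt hyt hdist)
      calc ‖deriv f y‖ ≤ C * ‖y ^ (n+1)‖ := this
        _ ≤ C * |t| ^ (n+1) := by
            rw [norm_pow, Real.norm_eq_abs]
            exact mul_le_mul_of_nonneg_left (pow_le_pow_left₀ (abs_nonneg y) hyt _) hC0.le
    rw [h0, sub_zero] at hmv
    calc ‖f t‖ ≤ (C * |t| ^ (n + 1)) * ‖t - (0:ℝ)‖ := hmv
      _ = C * ‖t ^ (n + 1 + 1)‖ := by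
          rw [sub_zero, Real.norm_eq_abs, Real.norm_eq_abs, abs_pow]
          ring

lemma myle_coe_top (i : ℕ) : (i : WithTop ℕ∞) ≤ ((⊤:ℕ∞) : WithTop ℕ∞) := by exact_mod_cast le_top

/-- If `f` is smooth and `f = O(t^(k+1))` at `0`, its derivatives up to order `k` vanish at `0`. -/
lemma myDerivs_zero_of_bigO {f : ℝ → E} (hf : ContDiff ℝ (⊤ : ℕ∞) f) (k : ℕ)
    (hO : f =O[nhds (0:ℝ)] fun t => t ^ (k + 1)) : ∀ j ≤ k, iteratedDeriv j f 0 = 0 := by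
  intro j hj
  induction j using Nat.strong_induction_on with
  | _ j IH =>
  set c : E := iteratedDeriv j f 0 with hc
  -- p t = j! • f t - t^j • c  has all derivatives up to j vanishing at 0
  set q : ℝ → E := fun t => t ^ j • c with hq
  set p : ℝ → E := fun t => (j.factorial : ℝ) • f t - q t with hp
  have hqC : ContDiff ℝ (⊤ : ℕ∞) q := (contDiff_id.pow j).smul contDiff_const
  have hpC : ContDiff ℝ (⊤ : ℕ∞) p := ((contDiff_const.smul hf)).sub hqC
  have hqd : ∀ i : ℕ, iteratedDeriv i q 0 = ((j.descFactorial i : ℝ) * (0:ℝ) ^ (j - i)) • c := by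
    intro i
    rw [hq]
    have := myIteratedDeriv_smul_const (f := fun t : ℝ => t ^ j) (contDiff_id.pow j) c i
    rw [this, myIteratedDeriv_pow]
  have hsmul : ∀ (i : ℕ) (g : ℝ → E), ContDiff ℝ (⊤ : ℕ∞) g →
      iteratedDeriv i (fun t => (j.factorial : ℝ) • g t) 0 = (j.factorial : ℝ) • iteratedDeriv i g 0 := by
    intro i g hg
    have := iteratedDerivWithin_const_smul (𝕜 := ℝ) (f := g) (s := univ) (x := (0:ℝ))
      (Set.mem_univ _) uniqueDiffOn_univ (n := i) (j.factorial : ℝ) ((hg.of_le (myle_coe_top i)).contDiffWithinAt)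
    simpa [iteratedDerivWithin_univ] using this
  have hpd : ∀ i ≤ j, iteratedDeriv i p 0 = 0 := by
    intro i hi
    have hsub : iteratedDeriv i p 0 = (j.factorial : ℝ) • iteratedDeriv i f 0 - iteratedDeriv i q 0 := by
      have := iteratedDerivWithin_sub (𝕜 := ℝ) (s := univ) (x := (0:ℝ)) (Set.mem_univ _)
        uniqueDiffOn_univ (n := i) (f := fun t => (j.factorial : ℝ) • f t) (g := q)
        (((contDiff_const.smul hf).of_le (myle_coe_top i)).contDiffWithinAt)
        ((hqC.of_le (myle_coe_top i)).contDiffWithinAt)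
      simp only [iteratedDerivWithin_univ] at this
      have heq : (fun t => (j.factorial : ℝ) • f t - q t) = ((fun t => (j.factorial : ℝ) • f t) - q) := rfl
      calc iteratedDeriv i p 0 = iteratedDeriv i ((fun t => (j.factorial : ℝ) • f t) - q) 0 := by rw [hp, heq]
        _ = _ := by rw [this, hsmul i f hf]
    rcases lt_or_eq_of_le hi with hlt | rfl
    · rw [hsub, hqd i, IH i hlt (by omega)]
      have : (0:ℝ) ^ (j - i) = 0 := zero_pow (by omega)
      simp [this]
    · rw [hsub, hqd i]
      simp [Nat.descFactorial_self, ← hc]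
  have hpO : p =O[nhds (0:ℝ)] fun t => t ^ (j + 1) := myBigO_of_derivs_zero j hpC hpd
  -- q = j! • f - p = O(t^(j+1))
  have hfO : (fun t => (j.factorial : ℝ) • f t) =O[nhds (0:ℝ)] fun t => t ^ (j + 1) := by
    refine (hO.const_smul_left _).trans ?_
    rw [isBigO_iff]
    refine ⟨1, ?_⟩
    have : ∀ᶠ t in nhds (0:ℝ), |t| ≤ 1 := by
      have := Metric.eventually_nhds_iff.mpr (⟨1, one_pos, fun {t} ht => le_of_lt (by simpa [Real.dist_eq] using ht)⟩ :
        ∃ ε > 0, ∀ ⦃t : ℝ⦄, dist t 0 < ε → |t| ≤ 1)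
      exact this
    filter_upwards [this] with t ht
    rw [one_mul, Real.norm_eq_abs, Real.norm_eq_abs, abs_pow, abs_pow]
    exact pow_le_pow_of_le_one (abs_nonneg t) ht (by omega)
  have hqO : q =O[nhds (0:ℝ)] fun t => t ^ (j + 1) := by
    have : q = fun t => (j.factorial : ℝ) • f t - p t := by funext t; simp only [hp, hq]; abel
    rw [this]
    exact hfO.sub hpO
  -- conclude c = 0
  have hcz : c = 0 := by
    obtain ⟨C, hC⟩ := hqO.bound
    by_contra hne
    obtain ⟨ε, hε0, hb⟩ := Metric.eventually_nhds_iff.mp hC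
    -- choose t small positive
    have key : ∀ t : ℝ, 0 < t → t < ε → ‖c‖ ≤ C * t := by
      intro t ht0 htε
      have := hb (y := t) (by simpa [Real.dist_eq, abs_of_pos ht0] using htε)
      rw [hq] at this
      simp only [norm_smul, Real.norm_eq_abs, abs_pow, abs_of_pos ht0, norm_pow] at this
      have hpow : t ^ j > 0 := pow_pos ht0 j
      have : t ^ j * ‖c‖ ≤ C * (t ^ j * t) := by
        calc t ^ j * ‖c‖ ≤ C * t ^ (j+1) := this
          _ = C * (t ^ j * t) := by ring_nf
      have hle2 : t ^ j * ‖c‖ ≤ t ^ j * (C * t) := by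
        calc t ^ j * ‖c‖ ≤ C * (t ^ j * t) := this
          _ = t ^ j * (C * t) := by ring
      exact le_of_mul_le_mul_left hle2 hpow
    have hlim : Filter.Tendsto (fun t : ℝ => C * t) (nhds 0) (nhds 0) := by
      simpa using (tendsto_id (x := nhds (0:ℝ))).const_mul C
    have : ‖c‖ ≤ 0 := by
      have hev : ∀ᶠ t in nhdsWithin 0 (Set.Ioi (0:ℝ)), ‖c‖ ≤ C * t := by
        filter_upwards [Ioo_mem_nhdsGT_of_mem (by simp [hε0] : (0:ℝ) ∈ Set.Ico 0 ε)] with t ht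
        exact key t ht.1 ht.2
      exact ge_of_tendsto (hlim.mono_left nhdsWithin_le_nhds) hev
    exact hne (norm_le_zero_iff.mp this)
  exact hcz

lemma myIteratedDeriv_sub {f g : ℝ → E} (hf : ContDiff ℝ (⊤ : ℕ∞) f)
    (hg : ContDiff ℝ (⊤ : ℕ∞) g) (n : ℕ) (t : ℝ) :
    iteratedDeriv n (fun s => f s - g s) t = iteratedDeriv n f t - iteratedDeriv n g t := by
  have := iteratedDerivWithin_sub (Set.mem_univ t) uniqueDiffOn_univ
    ((hf.of_le (myle_coe_top n)).contDiffWithinAt) ((hg.of_le (myle_coe_top n)).contDiffWithinAt)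
  simp only [iteratedDerivWithin_univ] at this
  exact this

lemma myIteratedDeriv_add {f g : ℝ → E} (hf : ContDiff ℝ (⊤ : ℕ∞) f)
    (hg : ContDiff ℝ (⊤ : ℕ∞) g) (n : ℕ) (t : ℝ) :
    iteratedDeriv n (fun s => f s + g s) t = iteratedDeriv n f t + iteratedDeriv n g t := by
  have := iteratedDerivWithin_add (Set.mem_univ t) uniqueDiffOn_univ
    ((hf.of_le (myle_coe_top n)).contDiffWithinAt) ((hg.of_le (myle_coe_top n)).contDiffWithinAt)
  simp only [iteratedDerivWithin_univ] at this
  exact this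

lemma myEventually_abs_le_one : ∀ᶠ t : ℝ in nhds 0, |t| ≤ 1 := by
  filter_upwards [Metric.ball_mem_nhds (0:ℝ) one_pos] with t ht
  exact le_of_lt (by simpa [Real.dist_eq] using ht)

lemma myPow_isBigO {a b : ℕ} (h : b ≤ a) : (fun t : ℝ => t ^ a) =O[nhds (0:ℝ)] fun t => t ^ b := by
  rw [Asymptotics.isBigO_iff]
  refine ⟨1, ?_⟩
  filter_upwards [myEventually_abs_le_one] with t ht
  rw [one_mul, Real.norm_eq_abs, Real.norm_eq_abs, abs_pow, abs_pow]
  exact pow_le_pow_of_le_one (abs_nonneg t) ht h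


/-- **The first non-vanishing derivative of the inverse family.**
Let `φ : ℝ × ℝⁿ → ℝⁿ` be a smooth curve of diffeomorphisms through the identity whose
inverse family `ψ`, `ψ(t,x) = φ(t,·)⁻¹(x)`, is smooth.  If the `t`-derivatives of `φ` at
`0` vanish up to order `k−1` and the `k`-th one is `k!·X`, then the `t`-derivatives of `ψ`
at `0` vanish up to order `k−1` and the `k`-th one is `−k!·X`. -/
theorem inverse_family_first_nonvanishing_derivative {d : ℕ}
    (φ ψ : ℝ → (Fin d → ℝ) → (Fin d → ℝ))
    (hφ : ContDiff ℝ (⊤ : ℕ∞) fun p : ℝ × (Fin d → ℝ) => φ p.1 p.2)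
    (hψ : ContDiff ℝ (⊤ : ℕ∞) fun p : ℝ × (Fin d → ℝ) => ψ p.1 p.2)
    (hφ0 : ∀ x, φ 0 x = x)
    (hinv : ∀ t x, ψ t (φ t x) = x ∧ φ t (ψ t x) = x)
    (k : ℕ) (hk : 1 ≤ k) (X : (Fin d → ℝ) → (Fin d → ℝ))
    (hX : ∀ x, (∀ j, 1 ≤ j → j < k → iteratedDeriv j (fun t => φ t x) 0 = 0) ∧
      iteratedDeriv k (fun t => φ t x) 0 = (k.factorial : ℝ) • X x) :
    ∀ x, (∀ j, 1 ≤ j → j < k → iteratedDeriv j (fun t => ψ t x) 0 = 0) ∧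
      iteratedDeriv k (fun t => ψ t x) 0 = -((k.factorial : ℝ) • X x) := by
  obtain ⟨m, rfl⟩ : ∃ m, k = m + 1 := ⟨k - 1, (Nat.succ_pred_eq_of_pos hk).symm⟩
  intro x
  have hg : ContDiff ℝ (⊤ : ℕ∞) (fun t => ψ t x) := hψ.comp (contDiff_id.prodMk contDiff_const)
  have hg0 : ψ 0 x = x := by have h := (hinv 0 x).2; rwa [hφ0] at h
  -- the displacement r
  set r : ℝ → (Fin d → ℝ) → (Fin d → ℝ) := fun t y => φ t y - y with hr
  have hrC : ContDiff ℝ (⊤ : ℕ∞) (fun p : ℝ × (Fin d → ℝ) => r p.1 p.2) := hφ.sub contDiff_snd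
  have hkey : ∀ t, ψ t x - x = -(r t (ψ t x)) := by
    intro t
    have h2 := (hinv t x).2
    simp only [hr, h2]
    abel
  -- smoothness of sections
  have hrxC : ContDiff ℝ (⊤ : ℕ∞) (fun t => r t x) := hrC.comp (contDiff_id.prodMk contDiff_const)
  have hrgC : ContDiff ℝ (⊤ : ℕ∞) (fun t => r t (ψ t x)) :=
    hrC.comp (contDiff_id.prodMk hg)
  have hφxC : ContDiff ℝ (⊤ : ℕ∞) (fun t => φ t x) := hφ.comp (contDiff_id.prodMk contDiff_const)
  -- derivatives of t ↦ r t x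
  have hrxd : ∀ j, 1 ≤ j →
      iteratedDeriv j (fun t => r t x) 0 = iteratedDeriv j (fun t => φ t x) 0 := by
    intro j hj
    have : (fun t => r t x) = fun t => φ t x - x := by funext t; rw [hr]
    rw [this, myIteratedDeriv_sub_const x j hj]
  have A1 : (fun t => r t x) =O[nhds (0:ℝ)] fun t => t ^ (m + 1) := by
    refine myBigO_of_derivs_zero m hrxC ?_
    intro j hj
    rcases Nat.eq_zero_or_pos j with rfl | hj1
    · simp [iteratedDeriv_zero, hr, hφ0]
    · rw [hrxd j hj1]; exact (hX x).1 j hj1 (by omega)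
  -- the monomial
  set mono : ℝ → (Fin d → ℝ) := fun t => t ^ (m + 1) • X x with hmono
  have hmonoC : ContDiff ℝ (⊤ : ℕ∞) mono := (contDiff_id.pow (m+1)).smul contDiff_const
  have hmonod : ∀ i : ℕ,
      iteratedDeriv i mono 0 = (((m+1).descFactorial i : ℝ) * (0:ℝ) ^ (m + 1 - i)) • X x := by
    intro i
    rw [hmono, myIteratedDeriv_smul_const (f := fun t : ℝ => t ^ (m+1))
      (by simpa using contDiff_id.pow (𝕜 := ℝ) (m+1)) (X x) i, myIteratedDeriv_pow]
  have A2 : (fun t => r t x - mono t) =O[nhds (0:ℝ)] fun t => t ^ (m + 2) := by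
    refine myBigO_of_derivs_zero (m+1) (hrxC.sub hmonoC) ?_
    intro j hj
    rw [myIteratedDeriv_sub hrxC hmonoC]
    rcases Nat.eq_zero_or_pos j with rfl | hj1
    · simp [iteratedDeriv_zero, hr, hφ0, hmono]
    · rcases Nat.lt_or_ge j (m+1) with hlt | hge
      · rw [hrxd j hj1, (hX x).1 j hj1 hlt, hmonod j, zero_pow (by omega : m + 1 - j ≠ 0)]
        simp
      · have hje : j = m + 1 := le_antisymm hj hge
        subst hje
        rw [hrxd _ hj1, (hX x).2, hmonod, Nat.descFactorial_self, Nat.sub_self, pow_zero, mul_one]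
        simp
  -- the partial derivative in the space variable
  set Dr : ℝ × (Fin d → ℝ) → (Fin d → ℝ) →L[ℝ] (Fin d → ℝ) :=
    fun p => fderiv ℝ (fun y => r p.1 y) p.2 with hDr
  have hDrC : ContDiff ℝ (⊤ : ℕ∞) Dr := by
    refine ContDiff.fderiv (m := ((⊤:ℕ∞) : WithTop ℕ∞)) (f := fun (p : ℝ × (Fin d → ℝ)) y => r p.1 y) (g := Prod.snd)
      ?_ contDiff_snd ?_
    · exact hrC.comp ((contDiff_fst.fst).prodMk contDiff_snd)
    · exact_mod_cast le_top
  have hDr0 : ∀ y, Dr (0, y) = 0 := by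
    intro y
    have hzero : (fun y' => r 0 y') = fun _ => (0 : Fin d → ℝ) := by
      funext y'; simp [hr, hφ0]
    show fderiv ℝ (fun y' => r 0 y') y = 0
    rw [hzero, fderiv_fun_const]
    rfl
  obtain ⟨K, U, hU, hlip⟩ :=
    ((hDrC.of_le (by exact_mod_cast le_top : ((1:ℕ) : WithTop ℕ∞) ≤ _)).contDiffAt
      (x := ((0:ℝ), x))).exists_lipschitzOnWith
  obtain ⟨ε, hε0, hball⟩ := Metric.mem_nhds_iff.mp hU
  have hbound : ∀ t y, dist t (0:ℝ) < ε → dist y x < ε → ‖Dr (t, y)‖ ≤ K * |t| := by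
    intro t y ht hy
    have hm1 : ((t, y) : ℝ × (Fin d → ℝ)) ∈ Metric.ball ((0:ℝ), x) ε := by
      rw [Metric.mem_ball, Prod.dist_eq]
      exact max_lt ht hy
    have hm2 : (((0:ℝ), y) : ℝ × (Fin d → ℝ)) ∈ Metric.ball ((0:ℝ), x) ε := by
      rw [Metric.mem_ball, Prod.dist_eq]
      exact max_lt (by simpa using hε0) hy
    have := hlip.dist_le_mul _ (hball hm1) _ (hball hm2)
    rw [hDr0 y] at this
    calc ‖Dr (t, y)‖ = dist (Dr (t, y)) 0 := by rw [dist_zero_right]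
      _ ≤ K * dist ((t, y) : ℝ × (Fin d → ℝ)) ((0:ℝ), y) := this
      _ = K * |t| := by
          rw [Prod.dist_eq]
          simp [Real.dist_eq]
  -- eventual mean-value bound
  have hcont : Filter.Tendsto (fun t => ψ t x) (nhds 0) (nhds x) := by
    have := hg.continuous.tendsto 0
    rwa [hg0] at this
  have hev : ∀ᶠ t : ℝ in nhds 0, |t| < ε/2 ∧ dist (ψ t x) x < ε/2 := by
    have h1 : ∀ᶠ t : ℝ in nhds 0, |t| < ε/2 := by
      filter_upwards [Metric.ball_mem_nhds (0:ℝ) (by linarith : (0:ℝ) < ε/2)] with t ht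
      simpa [Real.dist_eq] using ht
    have h2 : ∀ᶠ t : ℝ in nhds 0, dist (ψ t x) x < ε/2 :=
      hcont (Metric.ball_mem_nhds x (by linarith))
    exact h1.and h2
  have hMV : ∀ᶠ t : ℝ in nhds 0, ‖r t (ψ t x) - r t x‖ ≤ (K * |t|) * ‖ψ t x - x‖ := by
    filter_upwards [hev] with t ht
    obtain ⟨ht1, ht2⟩ := ht
    have hdiff : ∀ y' ∈ Metric.closedBall x ‖ψ t x - x‖,
        DifferentiableAt ℝ (fun y => r t y) y' := fun y' _ =>
      ((hrC.comp (contDiff_const.prodMk contDiff_id)).differentiable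
        (by simp)).differentiableAt
    have hbd : ∀ y' ∈ Metric.closedBall x ‖ψ t x - x‖,
        ‖fderiv ℝ (fun y => r t y) y'‖ ≤ K * |t| := by
      intro y' hy'
      have hy'x : dist y' x < ε := by
        have : dist y' x ≤ ‖ψ t x - x‖ := Metric.mem_closedBall.mp hy'
        have h2 : ‖ψ t x - x‖ < ε/2 := by rwa [← dist_eq_norm]
        linarith
      exact hbound t y' (by rw [Real.dist_eq, sub_zero]; linarith) hy'x
    have := Convex.norm_image_sub_le_of_norm_fderiv_le hdiff hbd
      (convex_closedBall x ‖ψ t x - x‖)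
      (Metric.mem_closedBall_self (norm_nonneg _))
      (Metric.mem_closedBall.mpr (by rw [dist_eq_norm]))
    exact this
  -- from O(t^n) for the displacement to O(t^(n+1)) for the difference
  have hstep : ∀ n : ℕ, ((fun t => ψ t x - x) =O[nhds (0:ℝ)] fun t => t ^ n) →
      (fun t => r t (ψ t x) - r t x) =O[nhds (0:ℝ)] fun t => t ^ (n + 1) := by
    intro n hn
    have hKt : (fun t : ℝ => K * |t|) =O[nhds (0:ℝ)] fun t => t := by
      have habs : (fun t : ℝ => |t|) =O[nhds (0:ℝ)] fun t => t := by
        rw [Asymptotics.isBigO_iff]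
        exact ⟨1, Filter.Eventually.of_forall fun t => by simp [Real.norm_eq_abs]⟩
      simpa using habs.const_mul_left (K : ℝ)
    have hprod : (fun t : ℝ => (K * |t|) * ‖ψ t x - x‖) =O[nhds (0:ℝ)]
        fun t => t * t ^ n := hKt.mul hn.norm_left
    have h1 : (fun t => r t (ψ t x) - r t x) =O[nhds (0:ℝ)]
        fun t : ℝ => (K * |t|) * ‖ψ t x - x‖ := by
      rw [Asymptotics.isBigO_iff]
      refine ⟨1, ?_⟩
      filter_upwards [hMV] with t ht
      rw [one_mul, Real.norm_eq_abs, abs_of_nonneg (by positivity)]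
      exact ht
    have h2 := h1.trans hprod
    refine h2.trans (Asymptotics.isBigO_of_le _ fun t => ?_)
    rw [Real.norm_eq_abs, Real.norm_eq_abs]
    apply le_of_eq
    rw [pow_succ]
    rw [abs_mul, abs_pow, abs_mul, abs_pow]
    ring
  -- bootstrap
  have boot : ∀ n : ℕ, 1 ≤ n → n ≤ m + 1 →
      (fun t => ψ t x - x) =O[nhds (0:ℝ)] fun t => t ^ n := by
    intro n
    induction n with
    | zero => omega
    | succ n ihn =>
      intro _ hle
      rcases Nat.eq_zero_or_pos n with rfl | hn
      · have := (hg.differentiable (by simp) 0).isBigO_sub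
        simpa [hg0] using this
      · have hprev := ihn hn (by omega)
        have hu := hstep n hprev
        have hid : (fun t => ψ t x - x) = fun t => -(r t (ψ t x) - r t x) - r t x := by
          funext t
          rw [hkey t]
          abel
        rw [hid]
        exact hu.neg_left.sub (A1.trans (myPow_isBigO (by omega)))
  -- the final big-O
  have hfin : (fun t => (ψ t x - x) + mono t) =O[nhds (0:ℝ)] fun t => t ^ (m + 2) := by
    have hu := hstep (m+1) (boot (m+1) (by omega) le_rfl)
    have hid : (fun t => (ψ t x - x) + mono t) =
        fun t => -(r t (ψ t x) - r t x) - (r t x - mono t) := by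
      funext t
      rw [hkey t]
      abel
    rw [hid]
    exact hu.neg_left.sub A2
  -- convert back to derivatives
  have hF1C : ContDiff ℝ (⊤ : ℕ∞) (fun t => (ψ t x - x) + mono t) :=
    (hg.sub contDiff_const).add hmonoC
  have hder := myDerivs_zero_of_bigO hF1C (m+1) hfin
  have hsplit : ∀ j, 1 ≤ j → j ≤ m + 1 →
      iteratedDeriv j (fun t => ψ t x) 0 + iteratedDeriv j mono 0 = 0 := by
    intro j hj1 hj2
    have h0 := hder j hj2
    have he : (fun t => (ψ t x - x) + mono t) = fun t => (ψ t x + mono t) - x := by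
      funext t; abel
    rw [he, myIteratedDeriv_sub_const x j hj1, myIteratedDeriv_add hg hmonoC] at h0
    exact h0
  constructor
  · intro j hj1 hj2
    have := hsplit j hj1 (by omega)
    rw [hmonod j, zero_pow (by omega : m + 1 - j ≠ 0)] at this
    simpa using this
  · have := hsplit (m+1) (by omega) le_rfl
    rw [hmonod (m+1)] at this
    simp only [Nat.descFactorial_self, Nat.sub_self, pow_zero, mul_one] at this
    have := eq_neg_of_add_eq_zero_left this
    exact this
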